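/- Let z ≥ 1 be an integer and α ∈ (0,1]. Let P be a nonempty finite multiset of points of the closed unit ball B(0,1) ⊆ ℝ^d, let e > 0 with |P| ≥ 2e, let n ∈ ℝ with |n − |P|| ≤ e, and let S ∈ ℝ^d with ‖S − ∑_{p∈P} p‖ ≤ e. Then for every point m ∈ ℝ^d, ∑_{p∈P} ‖p − S/n‖^z ≤ (1+α)·2^z·∑_{p∈P} ‖p − m‖^z + 5^z·(4z/α)^{z−1}·e. -/

import Mathlib

lemma powDiff (k : ℕ) : ∀ x y : ℝ, 0 ≤ y → y ≤ x → x ≤ 4 →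
    x ^ (k+1) - y ^ (k+1) ≤ (k+1) * (x - y) * 4 ^ k := by
  induction k with
  | zero => intro x y hy hyx hx4; simp
  | succ k ih =>
    intro x y hy hyx hx4
    have h1 := ih x y hy hyx hx4
    have hx : 0 ≤ x := hy.trans hyx
    have hyk : y ^ (k+1) ≤ 4 ^ k * 4 := by
      rw [← pow_succ]
      exact pow_le_pow_left₀ hy (hyx.trans hx4) _
    have heq : x ^ (k+2) - y ^ (k+2) = x * (x^(k+1) - y^(k+1)) + (x - y) * y^(k+1) := by ring
    have hnn : 0 ≤ x^(k+1) - y^(k+1) := by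
      have := pow_le_pow_left₀ hy hyx (k+1); linarith
    have h2 : x * (x^(k+1) - y^(k+1)) ≤ 4 * ((↑k + 1) * (x - y) * 4 ^ k) :=
      mul_le_mul hx4 h1 hnn (by norm_num)
    have h3 : (x - y) * y^(k+1) ≤ (x - y) * (4^k * 4) :=
      mul_le_mul_of_nonneg_left hyk (by linarith)
    have hcalc : x * (x^(k+1) - y^(k+1)) + (x - y) * y^(k+1)
        ≤ ((k:ℝ) + 1 + 1) * (x - y) * 4 ^ (k+1) := by
      calc x * (x^(k+1) - y^(k+1)) + (x - y) * y^(k+1)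
          ≤ 4 * ((↑k + 1) * (x - y) * 4 ^ k) + (x - y) * (4^k * 4) := add_le_add h2 h3
        _ = ((k:ℝ) + 1 + 1) * (x - y) * 4 ^ (k+1) := by rw [pow_succ]; ring
    rw [heq]
    push_cast
    linarith [hcalc]

lemma powerMean {α : Type*} (Q : Multiset α) (f : α → ℝ) (hf : ∀ p ∈ Q, 0 ≤ f p) (k : ℕ) :
    ((Q.map f).sum) ^ (k+1) ≤ (Q.card : ℝ) ^ k * (Q.map (fun p => f p ^ (k+1))).sum := by
  obtain ⟨l, rfl⟩ : ∃ l : List α, Q = ↑l := ⟨Q.toList, (Q.coe_toList).symm⟩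
  have hf' : ∀ i ∈ (Finset.univ : Finset (Fin l.length)), 0 ≤ f (l.get i) := by
    intro i _; exact hf _ (by simp [List.get_mem])
  have H := pow_sum_le_card_mul_sum_pow hf' k
  have key : ∀ g : α → ℝ, (Multiset.map g ↑l).sum = ∑ i : Fin l.length, g (l.get i) := by
    intro g
    have h : List.ofFn (fun i => g (l.get i)) = l.map g := by
      rw [show (fun i => g (l.get i)) = g ∘ l.get from rfl, ← List.map_ofFn, List.ofFn_get]
    rw [Multiset.map_coe, Multiset.sum_coe, ← h, List.sum_ofFn]
  rw [key, key]
  simpa using H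

lemma twoPoint (k : ℕ) (u v : ℝ) (hu : 0 ≤ u) (hv : 0 ≤ v) :
    (u + v) ^ (k+1) ≤ 2 ^ k * (u ^ (k+1) + v ^ (k+1)) := by
  have hf : ∀ i ∈ (Finset.univ : Finset (Fin 2)), 0 ≤ ![u, v] i := by
    intro i _; fin_cases i <;> simpa
  have H := pow_sum_le_card_mul_sum_pow hf k
  simpa [Fin.sum_univ_two] using H

lemma sumMapSub {α β : Type*} [AddCommGroup β] (Q : Multiset α) (g : α → β) (b : β) :
    (Q.map (fun p => b - g p)).sum = Q.card • b - (Q.map g).sum := by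
  induction Q using Multiset.induction_on with
  | empty => simp
  | cons a s ih => simp [ih, succ_nsmul]; abel

lemma natIneq (z : ℕ) (hz : 1 ≤ z) : z * 4 ^ z ≤ 5 ^ z * (4 * z) ^ (z - 1) := by
  obtain ⟨k, rfl⟩ := Nat.exists_eq_succ_of_ne_zero (by omega : z ≠ 0)
  simp only [Nat.succ_sub_one]
  rw [mul_pow, pow_succ]
  have h1 : 4 * (k + 1) ≤ 5 ^ (k + 1) * (k + 1) ^ k := by
    cases k with
    | zero => norm_num
    | succ k =>
      calc 4 * (k + 1 + 1) ≤ 5 ^ (k + 1 + 1) * (k + 1 + 1) := by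
            have : 4 ≤ 5 ^ (k + 1 + 1) := by
              calc 4 ≤ 5 ^ 1 := by norm_num
              _ ≤ 5 ^ (k + 1 + 1) := Nat.pow_le_pow_right (by norm_num) (by omega)
            exact Nat.mul_le_mul_right _ this
        _ ≤ 5 ^ (k + 1 + 1) * (k + 1 + 1) ^ (k + 1) :=
            Nat.mul_le_mul_left _ (Nat.le_self_pow (by omega) _)
  calc (k + 1) * (4 ^ k * 4) = (4 * (k + 1)) * 4 ^ k := by ring
    _ ≤ (5 ^ (k + 1) * (k + 1) ^ k) * 4 ^ k := Nat.mul_le_mul_right _ h1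
    _ = 5 ^ (k + 1) * (4 ^ k * (k + 1) ^ k) := by ring

lemma sumMapConst {α : Type*} (Q : Multiset α) (r : ℝ) :
    (Q.map (fun _ => r)).sum = (Q.card : ℝ) * r := by
  rw [Multiset.map_const', Multiset.sum_replicate, nsmul_eq_mul]

set_option maxHeartbeats 1000000 in
/-- **`(1,z)`-clustering cost of the noisy centroid.** Let `z ≥ 1` be an integer and
`α ∈ (0,1]`.  Let `P` be a nonempty finite multiset of points of the closed unit ball of
`ℝ^d`, let `e > 0` with `|P| ≥ 2e`, let `n ∈ ℝ` with `|n − |P|| ≤ e`, and let `S ∈ ℝ^d`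
with `‖S − ∑_{p∈P} p‖ ≤ e`.  Then for every point `m ∈ ℝ^d`,
`∑_{p∈P} ‖p − S/n‖^z ≤ (1+α)·2^z·∑_{p∈P} ‖p − m‖^z + 5^z·(4z/α)^{z−1}·e`. -/
theorem noisy_centroid_cost_z {d : ℕ} (z : ℕ) (hz : 1 ≤ z)
    (α : ℝ) (hα0 : 0 < α) (hα1 : α ≤ 1)
    (P : Multiset (EuclideanSpace ℝ (Fin d))) (hP : P ≠ 0)
    (hball : ∀ p ∈ P, p ∈ Metric.closedBall (0 : EuclideanSpace ℝ (Fin d)) 1)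
    (e : ℝ) (he : 0 < e) (hcard : 2 * e ≤ (P.card : ℝ))
    (n : ℝ) (hn : |n - (P.card : ℝ)| ≤ e)
    (S : EuclideanSpace ℝ (Fin d)) (hS : ‖S - P.sum‖ ≤ e)
    (m : EuclideanSpace ℝ (Fin d)) :
    (P.map (fun p => ‖p - n⁻¹ • S‖ ^ z)).sum
      ≤ (1 + α) * 2 ^ z * (P.map (fun p => ‖p - m‖ ^ z)).sum
        + 5 ^ z * (4 * z / α) ^ (z - 1) * e := by
  set N : ℝ := (P.card : ℝ) with hNdef
  have hN0 : 0 < N := lt_of_lt_of_le (by linarith) hcard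
  have hNne : N ≠ 0 := hN0.ne'
  -- norm of the sum is at most N
  have hnorm1 : ∀ p ∈ P, ‖p‖ ≤ 1 := by
    intro p hp
    have h := hball p hp
    rwa [Metric.mem_closedBall, dist_zero_right] at h
  have hT : ‖P.sum‖ ≤ N := by
    calc ‖P.sum‖ ≤ (P.map (fun p => ‖p‖)).sum := norm_multiset_sum_le P
      _ ≤ (P.map (fun _ => (1:ℝ))).sum :=
          Multiset.sum_map_le_sum_map _ _ (fun p hp => hnorm1 p hp)
      _ = N := by rw [sumMapConst, mul_one]
  -- n is positive and at least N/2
  have hnN : N - n ≤ e ∧ n - N ≤ e := by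
    constructor <;> cases abs_le.mp hn <;> linarith
  have hn2 : N / 2 ≤ n := by linarith [hnN.1]
  have hn0 : 0 < n := by linarith
  set c : EuclideanSpace ℝ (Fin d) := N⁻¹ • P.sum with hcdef
  have hc1 : ‖c‖ ≤ 1 := by
    rw [hcdef, norm_smul, Real.norm_eq_abs, abs_of_pos (inv_pos.mpr hN0)]
    rw [inv_mul_le_iff₀ hN0, mul_one]
    exact hT
  -- distance between noisy centroid and true centroid
  have hδ4 : ‖n⁻¹ • S - c‖ ≤ 4 * e / N := by
    have hexp : n⁻¹ • S - c = n⁻¹ • (S - P.sum) + (n⁻¹ - N⁻¹) • P.sum := by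
      rw [smul_sub, sub_smul, hcdef]; abel
    have hinv : |n⁻¹ - N⁻¹| ≤ e / (n * N) := by
      have : n⁻¹ - N⁻¹ = (N - n) / (n * N) := by field_simp
      rw [this, abs_div, abs_of_pos (mul_pos hn0 hN0)]
      gcongr
      rw [abs_sub_comm]; exact hn
    calc ‖n⁻¹ • S - c‖ ≤ ‖n⁻¹ • (S - P.sum)‖ + ‖(n⁻¹ - N⁻¹) • P.sum‖ := by
          rw [hexp]; exact norm_add_le _ _
      _ ≤ n⁻¹ * e + (e / (n * N)) * N := by
          rw [norm_smul, norm_smul, Real.norm_eq_abs, Real.norm_eq_abs,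
            abs_of_pos (inv_pos.mpr hn0)]
          have g1 : n⁻¹ * ‖S - P.sum‖ ≤ n⁻¹ * e :=
            mul_le_mul_of_nonneg_left hS (inv_pos.mpr hn0).le
          have g2 : |n⁻¹ - N⁻¹| * ‖P.sum‖ ≤ (e / (n * N)) * N :=
            mul_le_mul hinv hT (norm_nonneg _) (by positivity)
          linarith
      _ = 2 * e / n := by field_simp; ring
      _ ≤ 4 * e / N := by
          rw [div_le_div_iff₀ hn0 hN0]
          nlinarith [hn2]
  set δ : ℝ := ‖n⁻¹ • S - c‖ with hδdef
  have hδ0 : 0 ≤ δ := norm_nonneg _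
  have hδ2 : δ ≤ 2 := by
    refine hδ4.trans ?_
    rw [div_le_iff₀ hN0]; linarith
  set Sm : ℝ := (P.map (fun p => ‖p - m‖ ^ z)).sum with hSmdef
  have hSm0 : 0 ≤ Sm := by
    rw [hSmdef]
    apply Multiset.sum_nonneg
    intro x hx
    obtain ⟨p, _, rfl⟩ := Multiset.mem_map.mp hx
    positivity
  -- Step 1: per-point bound vs centroid
  have step1 : ∀ p ∈ P, ‖p - n⁻¹ • S‖ ^ z ≤ ‖p - c‖ ^ z + z * (4 * e / N) * 4 ^ (z - 1) := by
    intro p hp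
    have hu2 : ‖p - c‖ ≤ 2 := by
      calc ‖p - c‖ ≤ ‖p‖ + ‖c‖ := norm_sub_le _ _
        _ ≤ 2 := by linarith [hnorm1 p hp]
    have htri : ‖p - n⁻¹ • S‖ ≤ ‖p - c‖ + δ := by
      calc ‖p - n⁻¹ • S‖ = ‖(p - c) - (n⁻¹ • S - c)‖ := by abel_nf
        _ ≤ ‖p - c‖ + ‖n⁻¹ • S - c‖ := norm_sub_le _ _
    have hpow : ‖p - n⁻¹ • S‖ ^ z ≤ (‖p - c‖ + δ) ^ z :=
      pow_le_pow_left₀ (norm_nonneg _) htri z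
    have hpd := powDiff (z - 1) (‖p - c‖ + δ) (‖p - c‖) (norm_nonneg _)
      (by linarith) (by linarith)
    rw [Nat.sub_add_cancel hz] at hpd
    have hcast : ((z - 1 : ℕ) : ℝ) + 1 = (z : ℝ) := by
      have := Nat.sub_add_cancel hz
      exact_mod_cast congrArg (Nat.cast : ℕ → ℝ) this
    rw [hcast] at hpd
    have hmul : (z : ℝ) * (‖p - c‖ + δ - ‖p - c‖) * 4 ^ (z - 1)
        ≤ z * (4 * e / N) * 4 ^ (z - 1) := by
      have : ‖p - c‖ + δ - ‖p - c‖ = δ := by ring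
      rw [this]
      gcongr
    linarith
  -- Step 2: sum the per-point bound
  have step2 : (P.map (fun p => ‖p - n⁻¹ • S‖ ^ z)).sum
      ≤ (P.map (fun p => ‖p - c‖ ^ z)).sum + z * 4 ^ z * e := by
    calc (P.map (fun p => ‖p - n⁻¹ • S‖ ^ z)).sum
        ≤ (P.map (fun p => ‖p - c‖ ^ z + z * (4 * e / N) * 4 ^ (z - 1))).sum :=
          Multiset.sum_map_le_sum_map _ _ step1
      _ = (P.map (fun p => ‖p - c‖ ^ z)).sum + N * (z * (4 * e / N) * 4 ^ (z - 1)) := by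
          rw [Multiset.sum_map_add, sumMapConst]
      _ = (P.map (fun p => ‖p - c‖ ^ z)).sum + z * 4 ^ z * e := by
          congr 1
          have h4 : (4:ℝ) ^ z = 4 ^ (z - 1) * 4 := by
            rw [← pow_succ, Nat.sub_add_cancel hz]
          rw [h4]
          field_simp
  -- Step 3: centroid cost vs arbitrary point cost
  have hmc : N * ‖m - c‖ ^ z ≤ Sm := by
    set s : ℝ := (P.map (fun p => ‖p - m‖)).sum with hsdef
    have hs0 : 0 ≤ s := by
      rw [hsdef]
      apply Multiset.sum_nonneg
      intro x hx
      obtain ⟨p, _, rfl⟩ := Multiset.mem_map.mp hx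
      positivity
    have hmc1 : ‖m - c‖ ≤ N⁻¹ * s := by
      have hrep : m - c = N⁻¹ • (P.map (fun p => m - p)).sum := by
        rw [sumMapSub, smul_sub, hcdef, ← Nat.cast_smul_eq_nsmul ℝ, smul_smul,
          inv_mul_cancel₀ hNne, one_smul, Multiset.map_id']
      rw [hrep, norm_smul, Real.norm_eq_abs, abs_of_pos (inv_pos.mpr hN0)]
      gcongr
      calc ‖(P.map (fun p => m - p)).sum‖ ≤ ((P.map (fun p => m - p)).map (fun x => ‖x‖)).sum :=
            norm_multiset_sum_le _
        _ = (P.map (fun p => ‖p - m‖)).sum := by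
            rw [Multiset.map_map]
            exact congrArg Multiset.sum
              (Multiset.map_congr rfl (fun p _ => by simp [norm_sub_rev]))
    have hps := powerMean P (fun p => ‖p - m‖) (fun p _ => norm_nonneg _) (z - 1)
    rw [Nat.sub_add_cancel hz] at hps
    calc N * ‖m - c‖ ^ z ≤ N * (N⁻¹ * s) ^ z := by
          have := pow_le_pow_left₀ (norm_nonneg (m - c)) hmc1 z
          exact mul_le_mul_of_nonneg_left this hN0.le
      _ = (N * (N⁻¹) ^ z) * s ^ z := by rw [mul_pow]; ring
      _ ≤ (N * (N⁻¹) ^ z) * (N ^ (z - 1) * Sm) := by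
          exact mul_le_mul_of_nonneg_left hps (by positivity)
      _ = (N * (N⁻¹) ^ z * N ^ (z - 1)) * Sm := by ring
      _ = Sm := by
          have : N * (N⁻¹) ^ z * N ^ (z - 1) = 1 := by
            rw [inv_pow]
            rw [show z = (z - 1) + 1 from (Nat.sub_add_cancel hz).symm]
            rw [pow_succ]
            field_simp
            ring
            rw [Nat.add_sub_cancel_left]
          rw [this, one_mul]
  have step3 : (P.map (fun p => ‖p - c‖ ^ z)).sum ≤ 2 ^ z * Sm := by
    have hpt : ∀ p ∈ P, ‖p - c‖ ^ z ≤ 2 ^ (z - 1) * (‖p - m‖ ^ z + ‖m - c‖ ^ z) := by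
      intro p hp
      have htri : ‖p - c‖ ≤ ‖p - m‖ + ‖m - c‖ := by
        calc ‖p - c‖ = ‖(p - m) + (m - c)‖ := by abel_nf
          _ ≤ ‖p - m‖ + ‖m - c‖ := norm_add_le _ _
      have h1 : ‖p - c‖ ^ z ≤ (‖p - m‖ + ‖m - c‖) ^ z :=
        pow_le_pow_left₀ (norm_nonneg _) htri z
      have h2 := twoPoint (z - 1) (‖p - m‖) (‖m - c‖) (norm_nonneg _) (norm_nonneg _)
      rw [Nat.sub_add_cancel hz] at h2
      linarith
    calc (P.map (fun p => ‖p - c‖ ^ z)).sum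
        ≤ (P.map (fun p => 2 ^ (z - 1) * (‖p - m‖ ^ z + ‖m - c‖ ^ z))).sum :=
          Multiset.sum_map_le_sum_map _ _ hpt
      _ = 2 ^ (z - 1) * (Sm + N * ‖m - c‖ ^ z) := by
          rw [Multiset.sum_map_mul_left, Multiset.sum_map_add, sumMapConst]
      _ ≤ 2 ^ (z - 1) * (Sm + Sm) := by gcongr
      _ = 2 ^ (z - 1) * 2 * Sm := by ring
      _ = 2 ^ z * Sm := by rw [← pow_succ, Nat.sub_add_cancel hz]
  -- Final constant comparison
  have hconst : (z : ℝ) * 4 ^ z * e ≤ 5 ^ z * (4 * z / α) ^ (z - 1) * e := by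
    have hA : (z : ℝ) * 4 ^ z ≤ 5 ^ z * (4 * z) ^ (z - 1) := by
      exact_mod_cast natIneq z hz
    have hB : ((4 : ℝ) * z) ^ (z - 1) ≤ (4 * z / α) ^ (z - 1) := by
      apply pow_le_pow_left₀ (by positivity)
      rw [le_div_iff₀ hα0]
      have hz1 : (1:ℝ) ≤ (z:ℝ) := by exact_mod_cast hz
      nlinarith [hz1]
    have hz4 : (0:ℝ) ≤ 5 ^ z := by positivity
    nlinarith [mul_le_mul_of_nonneg_left hB hz4]
  calc (P.map (fun p => ‖p - n⁻¹ • S‖ ^ z)).sum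
      ≤ (P.map (fun p => ‖p - c‖ ^ z)).sum + z * 4 ^ z * e := step2
    _ ≤ 2 ^ z * Sm + z * 4 ^ z * e := by linarith
    _ ≤ (1 + α) * 2 ^ z * Sm + 5 ^ z * (4 * z / α) ^ (z - 1) * e := by
        have h2z : (0:ℝ) ≤ 2 ^ z := by positivity
        nlinarith [mul_nonneg (mul_nonneg hα0.le h2z) hSm0]
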